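/- arXiv:2211.04395 — 2 statements merged into one kernel-verified Lean document; each statement's English description precedes it below -/
import Mathlib

section
/- Let σ be a generalized sigmoid with negative entropy ψ. Let W be a real J×K matrix, A a real I×K matrix, x ∈ ℝ^J, y ∈ ℝ^K, b ∈ ℝ^I and λ ∈ ℝ^I. Define z* ∈ ℝ^K by z*_k = σ((Wᵀx + Aᵀλ)_k). Then z* is a critical point of the Lagrangian L(z) = (z − y)ᵀWᵀx − Σ_k ψ(z_k) + λᵀ(Az − b) (its gradient in z vanishes at z*), and the value of L at z* equals −yᵀWᵀx − bᵀλ + Σ_{k=1}^{K} φ((Wᵀx + Aᵀλ)_k). -/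
open Matrix

private lemma u_hasDerivAt (σ σ' u : ℝ → ℝ)
    (hσ : ∀ t, HasDerivAt σ (σ' t) t)
    (hσ'pos : ∀ t, 0 < σ' t)
    (hu : ∀ t, u (σ t) = t) (c : ℝ) :
    HasDerivAt u (σ' c)⁻¹ (σ c) := by
  have hσc : Continuous σ := continuous_iff_continuousAt.mpr fun t => (hσ t).continuousAt
  have hσm : StrictMono σ := strictMono_of_deriv_pos (fun t => by
    rw [(hσ t).deriv]; exact hσ'pos t)
  have surj : ∀ ε > (0:ℝ), ∀ y ∈ Set.Ioo (σ (c - ε)) (σ (c + ε)),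
      ∃ t ∈ Set.Ioo (c - ε) (c + ε), σ t = y := by
    intro ε hε y hy
    have hle : c - ε ≤ c + ε := by linarith
    obtain ⟨t, ht, hst⟩ := intermediate_value_Ioo hle hσc.continuousOn hy
    exact ⟨t, ht, hst⟩
  have hgcont : ContinuousAt u (σ c) := by
    rw [Metric.continuousAt_iff]
    intro ε hε
    refine ⟨min (σ c - σ (c - ε)) (σ (c + ε) - σ c), ?_, ?_⟩
    · exact lt_min (by have := hσm (show c - ε < c by linarith); linarith)
        (by have := hσm (show c < c + ε by linarith); linarith)
    · intro y hy
      rw [Real.dist_eq] at hy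
      have hm := abs_lt.mp hy
      have l1 := min_le_left (σ c - σ (c - ε)) (σ (c + ε) - σ c)
      have l2 := min_le_right (σ c - σ (c - ε)) (σ (c + ε) - σ c)
      have h1 : σ (c - ε) < y := by linarith
      have h2 : y < σ (c + ε) := by linarith
      obtain ⟨t, ht, hst⟩ := surj ε hε y ⟨h1, h2⟩
      rw [Real.dist_eq, ← hst]
      simp only [hu]
      rw [abs_lt]
      exact ⟨by linarith [ht.1], by linarith [ht.2]⟩
  have hfg : ∀ᶠ y in nhds (σ c), σ (u y) = y := by
    have hmem : Set.Ioo (σ (c - 1)) (σ (c + 1)) ∈ nhds (σ c) := by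
      apply Ioo_mem_nhds
      · exact hσm (by linarith)
      · exact hσm (by linarith)
    filter_upwards [hmem] with y hy
    obtain ⟨t, _, hst⟩ := surj 1 one_pos y hy
    rw [← hst, hu]
  have hf : HasDerivAt σ (σ' c) (u (σ c)) := by rw [hu]; exact hσ c
  exact HasDerivAt.of_local_left_inverse hgcont hf (ne_of_gt (hσ'pos c)) hfg

private lemma psi_hasDerivAt (σ σ' φ u ψ : ℝ → ℝ)
    (hσ : ∀ t, HasDerivAt σ (σ' t) t)
    (hσ'pos : ∀ t, 0 < σ' t)
    (hφ : ∀ t, HasDerivAt φ (σ t) t)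
    (hu : ∀ t, u (σ t) = t)
    (hψ : ∀ z, ψ z = z * u z - φ (u z)) (c : ℝ) :
    HasDerivAt ψ c (σ c) := by
  have hu' := u_hasDerivAt σ σ' u hσ hσ'pos hu c
  have h1 : HasDerivAt (fun z => z * u z) (1 * u (σ c) + σ c * (σ' c)⁻¹) (σ c) :=
    (hasDerivAt_id (σ c)).mul hu'
  have h2 : HasDerivAt (fun z => φ (u z)) (σ (u (σ c)) * (σ' c)⁻¹) (σ c) :=
    (hφ (u (σ c))).comp (σ c) hu'
  have h3 : HasDerivAt (fun z => z * u z - φ (u z)) _ (σ c) := h1.sub h2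
  have heq : (fun z => z * u z - φ (u z)) = ψ := by
    funext z; rw [hψ]
  rw [heq] at h3
  convert h3 using 1
  rw [hu]; ring

/-- Let `σ` be a generalized sigmoid with negative entropy
`ψ`.  Let `W` be a real `J × K` matrix, `A` a real `I × K` matrix, `x ∈ ℝ^J`,
`y ∈ ℝ^K`, `b ∈ ℝ^I` and `λ ∈ ℝ^I`.  Define `z* ∈ ℝ^K` by
`z* k = σ ((Wᵀx + Aᵀλ) k)`.  Then `z*` is a critical point of the Lagrangian
`L z = (z - y)ᵀ Wᵀ x - ∑ k, ψ (z k) + λᵀ (A z - b)` (its gradient in `z`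
vanishes at `z*`, i.e. every partial derivative of `L` vanishes there), and
the value of `L` at `z*` equals `-yᵀWᵀx - bᵀλ + ∑ k, φ ((Wᵀx + Aᵀλ) k)`. -/
theorem lagrangian_critical_point_and_value
    (σ σ' φ u ψ : ℝ → ℝ)
    (hσ : ∀ t, HasDerivAt σ (σ' t) t)
    (hσ'cont : Continuous σ')
    (hσ'pos : ∀ t, 0 < σ' t)
    (hφ : ∀ t, HasDerivAt φ (σ t) t)
    (hu : ∀ t, u (σ t) = t)
    (hψ : ∀ z, ψ z = z * u z - φ (u z))
    {I J K : ℕ} (W : Matrix (Fin J) (Fin K) ℝ) (A : Matrix (Fin I) (Fin K) ℝ)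
    (x : Fin J → ℝ) (y : Fin K → ℝ) (b lam : Fin I → ℝ)
    (L : (Fin K → ℝ) → ℝ)
    (hL : ∀ z : Fin K → ℝ,
      L z = (z - y) ⬝ᵥ (Wᵀ *ᵥ x) - (∑ k, ψ (z k)) + lam ⬝ᵥ (A *ᵥ z - b))
    (zStar : Fin K → ℝ)
    (hzStar : ∀ k, zStar k = σ ((Wᵀ *ᵥ x + Aᵀ *ᵥ lam) k)) :
    (∀ k, HasDerivAt (fun t => L (Function.update zStar k t)) 0 (zStar k)) ∧
    L zStar = -(y ⬝ᵥ (Wᵀ *ᵥ x)) - b ⬝ᵥ lam + ∑ k, φ ((Wᵀ *ᵥ x + Aᵀ *ᵥ lam) k) := by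
  set v : Fin K → ℝ := Wᵀ *ᵥ x with hv
  set w : Fin K → ℝ := Aᵀ *ᵥ lam with hw
  -- rewrite L in a convenient form
  have hL' : ∀ z : Fin K → ℝ,
      L z = (∑ j, (z j * (v j + w j) - ψ (z j))) - y ⬝ᵥ v - lam ⬝ᵥ b := by
    intro z
    rw [hL]
    have hAz : lam ⬝ᵥ (A *ᵥ z) = w ⬝ᵥ z := by
      rw [Matrix.dotProduct_mulVec, hw, Matrix.mulVec_transpose]
    have expand : ∑ j, (z j * (v j + w j) - ψ (z j))
        = z ⬝ᵥ v + w ⬝ᵥ z - ∑ j, ψ (z j) := by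
      simp only [dotProduct, ← Finset.sum_add_distrib, ← Finset.sum_sub_distrib]
      apply Finset.sum_congr rfl; intro j _; ring
    rw [sub_dotProduct, dotProduct_sub, hAz, expand]
    ring
  constructor
  · intro k
    have key : ∀ t, L (Function.update zStar k t) =
        (t * (v k + w k) - ψ t) +
        ((∑ j ∈ Finset.univ \ {k}, (zStar j * (v j + w j) - ψ (zStar j)))
          - y ⬝ᵥ v - lam ⬝ᵥ b) := by
      intro t
      rw [hL']
      have : (fun j => Function.update zStar k t j * (v j + w j) - ψ (Function.update zStar k t j))
          = Function.update (fun j => zStar j * (v j + w j) - ψ (zStar j)) k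
              (t * (v k + w k) - ψ t) := by
        funext j
        exact Function.apply_update (fun j s => s * (v j + w j) - ψ s) zStar k t j
      rw [this, Finset.sum_update_of_mem (Finset.mem_univ k)]
      abel
    have hfun : (fun t => L (Function.update zStar k t)) =
        fun t => (t * (v k + w k) - ψ t) +
        ((∑ j ∈ Finset.univ \ {k}, (zStar j * (v j + w j) - ψ (zStar j)))
          - y ⬝ᵥ v - lam ⬝ᵥ b) := funext key
    rw [hfun]
    have hψd : HasDerivAt ψ (v k + w k) (zStar k) := by
      rw [hzStar k]
      simp only [Pi.add_apply]
      exact psi_hasDerivAt σ σ' φ u ψ hσ hσ'pos hφ hu hψ (v k + w k)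
    have h1 : HasDerivAt (fun t : ℝ => t * (v k + w k)) (v k + w k) (zStar k) :=
      hasDerivAt_mul_const _
    have := (h1.sub hψd).add_const
      ((∑ j ∈ Finset.univ \ {k}, (zStar j * (v j + w j) - ψ (zStar j)))
          - y ⬝ᵥ v - lam ⬝ᵥ b)
    simpa using this
  · rw [hL']
    have hbl : b ⬝ᵥ lam = lam ⬝ᵥ b := dotProduct_comm b lam
    have hsum : ∀ j : Fin K, zStar j * (v j + w j) - ψ (zStar j) = φ ((v + w) j) := by
      intro j
      rw [hzStar j]
      simp only [Pi.add_apply, hψ, hu]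
      ring
    rw [Finset.sum_congr rfl (fun j _ => hsum j), hbl]
    simp only [Pi.add_apply]
    abel
end

section
/- Let σ be a generalized sigmoid with antiderivative φ. Let W be a real J×K matrix, A a real I×K matrix, x ∈ ℝ^J, y ∈ ℝ^K and b = Ay ∈ ℝ^I. Define the dual loss E(λ) = −yᵀ(Wᵀx + Aᵀλ) + Σ_{k=1}^{K} φ((Wᵀx + Aᵀλ)_k) for λ ∈ ℝ^I. Then the gradient of E at λ equals A·z(λ) − b, where z(λ)_k = σ((Wᵀx + Aᵀλ)_k); in particular, if λ is a critical point of E then the nonlinear predictor z(λ) satisfies the linear equality constraints A·z(λ) = b. -/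
open Matrix

/-- Let `σ` be a generalized sigmoid with antiderivative
`φ`.  Let `W` be a real `J × K` matrix, `A` a real `I × K` matrix, `x ∈ ℝ^J`,
`y ∈ ℝ^K` and `b = A y ∈ ℝ^I`.  Define the dual loss
`E λ = -yᵀ (Wᵀx + Aᵀλ) + ∑ k, φ ((Wᵀx + Aᵀλ) k)` for `λ ∈ ℝ^I`.  Then the
gradient of `E` at `λ` equals `A ⬝ z(λ) - b` (componentwise, each partial
derivative `∂E/∂λᵢ` equals `(A ⬝ z(λ) - b) i`), where
`z(λ) k = σ ((Wᵀx + Aᵀλ) k)`; in particular, if `λ` is a critical point of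
`E` then the nonlinear predictor `z(λ)` satisfies the linear equality
constraints `A ⬝ z(λ) = b`. -/
theorem dual_loss_gradient_and_constraint
    (σ σ' φ : ℝ → ℝ)
    (hσ : ∀ t, HasDerivAt σ (σ' t) t)
    (hσ'cont : Continuous σ')
    (hσ'pos : ∀ t, 0 < σ' t)
    (hφ : ∀ t, HasDerivAt φ (σ t) t)
    {I J K : ℕ} (W : Matrix (Fin J) (Fin K) ℝ) (A : Matrix (Fin I) (Fin K) ℝ)
    (x : Fin J → ℝ) (y : Fin K → ℝ) (b : Fin I → ℝ)
    (hb : b = A *ᵥ y)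
    (E : (Fin I → ℝ) → ℝ)
    (hE : ∀ lam : Fin I → ℝ,
      E lam = -(y ⬝ᵥ (Wᵀ *ᵥ x + Aᵀ *ᵥ lam)) + ∑ k, φ ((Wᵀ *ᵥ x + Aᵀ *ᵥ lam) k))
    (z : (Fin I → ℝ) → Fin K → ℝ)
    (hz : ∀ lam k, z lam k = σ ((Wᵀ *ᵥ x + Aᵀ *ᵥ lam) k)) :
    (∀ (lam : Fin I → ℝ) (i : Fin I),
      HasDerivAt (fun t => E (Function.update lam i t)) ((A *ᵥ z lam - b) i) (lam i)) ∧
    (∀ lam : Fin I → ℝ,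
      (∀ i : Fin I, HasDerivAt (fun t => E (Function.update lam i t)) 0 (lam i)) →
        A *ᵥ z lam = b) := by
  have main : ∀ (lam : Fin I → ℝ) (i : Fin I),
      HasDerivAt (fun t => E (Function.update lam i t)) ((A *ᵥ z lam - b) i) (lam i) := by
    intro lam i
    set c : Fin K → ℝ := Wᵀ *ᵥ x + Aᵀ *ᵥ lam with hc
    -- inner function
    have hf : ∀ k : Fin K, HasDerivAt
        (fun t => (Wᵀ *ᵥ x + Aᵀ *ᵥ Function.update lam i t) k) (A i k) (lam i) := by
      intro k
      have h1 : ∀ t, (Wᵀ *ᵥ x + Aᵀ *ᵥ Function.update lam i t) k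
          = (Wᵀ *ᵥ x) k + ∑ j, A j k * Function.update lam i t j := by
        intro t; simp [mulVec, dotProduct, transpose_apply]
      simp only [h1]
      have hsum : HasDerivAt (fun t => ∑ j, A j k * Function.update lam i t j)
          (∑ j, if j = i then A j k else 0) (lam i) := by
        apply HasDerivAt.fun_sum
        intro j _
        by_cases hji : j = i
        · subst hji
          simp only [if_pos rfl]
          have : (fun t => A j k * Function.update lam j t j) = fun t => A j k * t := by
            funext t; simp
          rw [this]
          simpa using (hasDerivAt_id (lam j)).const_mul (A j k)
        · simp only [if_neg hji]
          have : (fun t => A j k * Function.update lam i t j) = fun _ => A j k * lam j := by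
            funext t; simp [Function.update_of_ne hji]
          rw [this]; exact hasDerivAt_const _ _
      simp only [Finset.sum_ite_eq', Finset.mem_univ, if_pos] at hsum
      simpa using hsum.const_add ((Wᵀ *ᵥ x) k)
    have hfk : ∀ k, (Wᵀ *ᵥ x + Aᵀ *ᵥ Function.update lam i (lam i)) k = c k := by
      intro k; rw [Function.update_eq_self]
    -- E part
    have hE' : (fun t => E (Function.update lam i t))
        = fun t => -(∑ k, y k * (Wᵀ *ᵥ x + Aᵀ *ᵥ Function.update lam i t) k)
            + ∑ k, φ ((Wᵀ *ᵥ x + Aᵀ *ᵥ Function.update lam i t) k) := by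
      funext t; rw [hE]; simp [dotProduct]
    rw [hE']
    have h2 : HasDerivAt (fun t => ∑ k, y k * (Wᵀ *ᵥ x + Aᵀ *ᵥ Function.update lam i t) k)
        (∑ k, y k * A i k) (lam i) :=
      HasDerivAt.fun_sum fun k _ => (hf k).const_mul (y k)
    have h3 : HasDerivAt (fun t => ∑ k, φ ((Wᵀ *ᵥ x + Aᵀ *ᵥ Function.update lam i t) k))
        (∑ k, σ (c k) * A i k) (lam i) := by
      apply HasDerivAt.fun_sum
      intro k _
      have := (hφ ((Wᵀ *ᵥ x + Aᵀ *ᵥ Function.update lam i (lam i)) k)).comp (lam i) (hf k)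
      rw [hfk k] at this
      exact this
    have := h2.fun_neg.fun_add h3
    refine this.congr_deriv ?_
    simp [mulVec, dotProduct, hz, hb, hc, Finset.sum_sub_distrib, mul_comm]
    ring
  refine ⟨main, fun lam hcrit => ?_⟩
  funext i
  have h0 := hcrit i
  have h1 := main lam i
  have := h1.unique h0
  have : (A *ᵥ z lam - b) i = 0 := this
  have := sub_eq_zero.mp (by simpa [Pi.sub_apply] using this)
  exact this
end
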